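/- Fix k, l < ω, a function F : {0,…,l} → {0,…,k}, ordinals ε_0 ≥ … ≥ ε_l, and a tree P with rank(P) = ω^{ω^{ε_0}}·…·ω^{ω^{ε_l}}. Define f : Λ_2(P) → {0,…,k} by f(s,t) = F(ς_P(s,t)). Then for every j ≤ k, setting A = {i ≤ l : F(i) = j} and α = ω^{ω^{ε_0}·1_A(0)}·…·ω^{ω^{ε_l}·1_A(l)} (with α = 1 if A = ∅), every subtree Q of P such that f(s,t) = j for all (s,t) ∈ Λ_2(Q) satisfies rank(Q) ≤ α. -/

import Mathlib

open Ordinal Set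

universe u

/-- The set of maximal elements ("leaves") of `P`. -/
def treeLeaves {α : Type u} [PartialOrder α] (P : Set α) : Set α :=
  {t ∈ P | ∀ s ∈ P, ¬ t < s}

/-- The derivative `P' = P \ Leaves P`. -/
def treeDeriv {α : Type u} [PartialOrder α] (P : Set α) : Set α :=
  P \ treeLeaves P

/-- The transfinite iterated derivative `P^ξ`. -/
noncomputable def derivIter {α : Type u} [PartialOrder α] (P : Set α) (ξ : Ordinal.{u}) :
    Set α :=
  Ordinal.limitRecOn ξ P (fun _ ih => treeDeriv ih)
    (fun o _ ih => ⋂ (ζ : Set.Iio o), ih ζ.1 ζ.2)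

/-- `P` is a tree: every ancestor set is well-ordered (a well-founded chain). -/
def IsTree {α : Type u} [PartialOrder α] (P : Set α) : Prop :=
  ∀ t ∈ P, IsChain (· ≤ ·) {s ∈ P | s ≤ t} ∧ {s ∈ P | s ≤ t}.WellFoundedOn (· < ·)

/-- `P` is well-founded: some transfinite derivative is empty. -/
def IsWFTree {α : Type u} [PartialOrder α] (P : Set α) : Prop :=
  ∃ ξ : Ordinal.{u}, derivIter P ξ = ∅

/-- The rank of a well-founded tree: the least `ξ` with `P^ξ = ∅`. -/
noncomputable def treeRank {α : Type u} [PartialOrder α] (P : Set α) : Ordinal.{u} :=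
  sInf {ξ | derivIter P ξ = ∅}

/-- `τ_P(t)`: the largest ordinal `ξ` with `t ∈ P^ξ`. -/
noncomputable def treeTau {α : Type u} [PartialOrder α] (P : Set α) (t : α) : Ordinal.{u} :=
  sSup {ξ | t ∈ derivIter P ξ}

/-- `τ_{P,β}(t)`: the largest ordinal `ξ` with `t ∈ P^{β·ξ}`. -/
noncomputable def treeTauMul {α : Type u} [PartialOrder α] (P : Set α) (β : Ordinal.{u})
    (t : α) : Ordinal.{u} :=
  sSup {ξ | t ∈ derivIter P (β * ξ)}

/-- `alpProd ε i = ω^{ω^{ε 0}} · ⋯ · ω^{ω^{ε i}}`. -/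
noncomputable def alpProd (ε : ℕ → Ordinal.{u}) : ℕ → Ordinal.{u}
  | 0 => omega0 ^ omega0 ^ ε 0
  | (i + 1) => alpProd ε i * omega0 ^ omega0 ^ ε (i + 1)

/-- The separation function `ς_P` of a tree whose rank has decomposition
`ω^{ω^{ε 0}} ⋯ ω^{ω^{ε l}}`: the least `i` such that `s, t` lie in the same block
`P^{α_i·δ} \ P^{α_i·(δ+1)}` for some ordinal `δ`. -/
noncomputable def sep {α : Type u} [PartialOrder α] (P : Set α) (ε : ℕ → Ordinal.{u})
    (s t : α) : ℕ :=
  sInf {i : ℕ | ∃ δ : Ordinal.{u},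
    s ∈ derivIter P (alpProd ε i * δ) \ derivIter P (alpProd ε i * (δ + 1)) ∧
    t ∈ derivIter P (alpProd ε i * δ) \ derivIter P (alpProd ε i * (δ + 1))}

/-- `indProd ε A l = ω^{ω^{ε 0}·1_A(0)} ⋯ ω^{ω^{ε l}·1_A(l)}`. -/
noncomputable def indProd (ε : ℕ → Ordinal.{u}) (A : Set ℕ) : ℕ → Ordinal.{u}
  | 0 => omega0 ^ (omega0 ^ ε 0 * A.indicator (fun _ => (1 : Ordinal.{u})) 0)
  | (i + 1) => indProd ε A i *
      omega0 ^ (omega0 ^ ε (i + 1) * A.indicator (fun _ => (1 : Ordinal.{u})) (i + 1))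

/-- `sumPow ε i = ω^{ε 0} + ⋯ + ω^{ε (i-1)}` (the partial sums `γ_i`). -/
noncomputable def sumPow (ε : ℕ → Ordinal.{u}) : ℕ → Ordinal.{u}
  | 0 => 0
  | (i + 1) => sumPow ε i + omega0 ^ ε i

/-- `indSum ε A i = Σ_{n < i} 1_A(n)·ω^{ε n}`. -/
noncomputable def indSum (ε : ℕ → Ordinal.{u}) (A : Set ℕ) : ℕ → Ordinal.{u}
  | 0 => 0
  | (i + 1) => indSum ε A i + A.indicator (fun _ => (1 : Ordinal.{u})) i * omega0 ^ ε i



section Aux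

variable {α : Type u} [PartialOrder α]

theorem derivIter_zero (P : Set α) : derivIter P 0 = P :=
  Ordinal.limitRecOn_zero ..

theorem derivIter_succ (P : Set α) (ξ : Ordinal.{u}) :
    derivIter P (Order.succ ξ) = treeDeriv (derivIter P ξ) :=
  Ordinal.limitRecOn_succ ..

theorem derivIter_limit (P : Set α) {ξ : Ordinal.{u}} (h : Order.IsSuccLimit ξ) :
    derivIter P ξ = ⋂ (ζ : Set.Iio ξ), derivIter P ζ.1 :=
  Ordinal.limitRecOn_limit _ _ _ _ h

theorem mem_treeDeriv_iff {P : Set α} {t : α} :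
    t ∈ treeDeriv P ↔ t ∈ P ∧ ∃ s ∈ P, t < s := by
  simp only [treeDeriv, treeLeaves, mem_diff, mem_setOf_eq, not_and, not_forall]
  constructor
  · rintro ⟨h1, h2⟩
    refine ⟨h1, ?_⟩
    obtain ⟨s, hs, h⟩ := h2 h1
    exact ⟨s, hs, not_not.1 h⟩
  · rintro ⟨h1, s, hs, h⟩
    exact ⟨h1, fun _ => ⟨s, hs, not_not.2 h⟩⟩

theorem treeDeriv_subset (P : Set α) : treeDeriv P ⊆ P := diff_subset

theorem derivIter_anti (P : Set α) :
    ∀ ξ ζ : Ordinal.{u}, ζ ≤ ξ → derivIter P ξ ⊆ derivIter P ζ := by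
  intro ξ
  induction ξ using Ordinal.limitRecOn with
  | zero =>
    intro ζ hζ
    rw [nonpos_iff_eq_zero.1 hζ]
  | add_one o ih =>
    rw [Ordinal.add_one_eq_succ]
    intro ζ hζ
    rcases eq_or_lt_of_le hζ with rfl | h
    · rfl
    · have h1 : derivIter P (Order.succ o) ⊆ derivIter P o := by
        rw [derivIter_succ]; exact treeDeriv_subset _
      exact h1.trans (ih ζ (Order.lt_succ_iff.1 h))
  | limit o ho ih =>
    intro ζ hζ
    rcases eq_or_lt_of_le hζ with rfl | h
    · rfl
    · rw [derivIter_limit P ho]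
      exact iInter_subset (fun (z : Set.Iio o) => derivIter P z.1) ⟨ζ, h⟩

theorem derivIter_subset (P : Set α) (ξ : Ordinal.{u}) : derivIter P ξ ⊆ P := by
  have := derivIter_anti P ξ 0 (by simp)
  rwa [derivIter_zero] at this

theorem bddAbove_tauSet {P : Set α} (hWF : IsWFTree P) (t : α) :
    BddAbove {ξ : Ordinal.{u} | t ∈ derivIter P ξ} := by
  obtain ⟨ξ₀, h₀⟩ := hWF
  refine ⟨ξ₀, fun ξ hξ => ?_⟩
  by_contra h
  push_neg at h
  have := derivIter_anti P ξ ξ₀ h.le hξ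
  rw [h₀] at this
  exact this

theorem tau_mem {P : Set α} (hWF : IsWFTree P) {t : α} (ht : t ∈ P) :
    t ∈ derivIter P (treeTau P t) := by
  have h0 : (0 : Ordinal.{u}) ∈ {ξ : Ordinal.{u} | t ∈ derivIter P ξ} := by
    rw [mem_setOf_eq, derivIter_zero]; exact ht
  have hne : {ξ : Ordinal.{u} | t ∈ derivIter P ξ}.Nonempty := ⟨0, h0⟩
  have hbdd := bddAbove_tauSet hWF t
  rcases Ordinal.zero_or_succ_or_isSuccLimit (treeTau P t) with h | ⟨a, h⟩ | h
  · rw [h, derivIter_zero]; exact ht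
  · have ha : a < treeTau P t := h ▸ Order.lt_succ a
    obtain ⟨ξ, hξ, haξ⟩ := exists_lt_of_lt_csSup hne ha
    have hle : ξ ≤ treeTau P t := le_csSup hbdd hξ
    have : ξ = treeTau P t := le_antisymm hle (by rw [← h]; exact Order.succ_le_of_lt haξ)
    rwa [← this]
  · rw [derivIter_limit P h, mem_iInter]
    rintro ⟨ζ, hζ⟩
    obtain ⟨ξ, hξ, hζξ⟩ := exists_lt_of_lt_csSup hne hζ
    exact derivIter_anti P ξ ζ hζξ.le hξ

theorem mem_derivIter_iff {P : Set α} (hWF : IsWFTree P) {t : α} (ht : t ∈ P)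
    {ξ : Ordinal.{u}} : t ∈ derivIter P ξ ↔ ξ ≤ treeTau P t :=
  ⟨fun h => le_csSup (bddAbove_tauSet hWF t) h,
   fun h => derivIter_anti P _ _ h (tau_mem hWF ht)⟩

theorem tau_lt_treeRank {P : Set α} (hWF : IsWFTree P) {t : α} (ht : t ∈ P) :
    treeTau P t < treeRank P := by
  have hr : derivIter P (treeRank P) = ∅ := csInf_mem hWF
  by_contra h
  push_neg at h
  have := (mem_derivIter_iff hWF ht).2 h
  rw [hr] at this
  exact this

theorem mem_of_lt_mem {P : Set α} {s t : α} (hst : s < t) (hs : s ∈ P) :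
    ∀ ξ : Ordinal.{u}, t ∈ derivIter P ξ → s ∈ derivIter P ξ := by
  intro ξ
  induction ξ using Ordinal.limitRecOn with
  | zero => rw [derivIter_zero]; intro _; exact hs
  | add_one o ih =>
    rw [Ordinal.add_one_eq_succ]
    rw [derivIter_succ]
    intro ht
    have ht' : t ∈ derivIter P o := (treeDeriv_subset _) ht
    exact mem_treeDeriv_iff.2 ⟨ih ht', t, ht', hst⟩
  | limit o ho ih =>
    rw [derivIter_limit P ho]
    intro ht
    rw [mem_iInter] at ht ⊢
    exact fun ζ => ih ζ.1 ζ.2 (ht ζ)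

theorem tau_add_one_le {P : Set α} (hWF : IsWFTree P) {s t : α} (hs : s ∈ P) (ht : t ∈ P)
    (hst : s < t) : treeTau P t + 1 ≤ treeTau P s := by
  have h1 : t ∈ derivIter P (treeTau P t) := tau_mem hWF ht
  have h2 : s ∈ derivIter P (treeTau P t) := mem_of_lt_mem hst hs _ h1
  have h3 : s ∈ derivIter P (Order.succ (treeTau P t)) := by
    rw [derivIter_succ]
    exact mem_treeDeriv_iff.2 ⟨h2, t, h1, hst⟩
  rw [Ordinal.add_one_eq_succ]
  exact (mem_derivIter_iff hWF hs).1 h3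

theorem treeRank_le_of_forall (Q : Set α) (g : α → Ordinal.{u}) (β : Ordinal.{u})
    (hlt : ∀ t ∈ Q, g t < β)
    (hmono : ∀ s ∈ Q, ∀ t ∈ Q, s < t → g t < g s) : treeRank Q ≤ β := by
  have key : ∀ ξ : Ordinal.{u}, ∀ t ∈ derivIter Q ξ, ξ ≤ g t := by
    intro ξ
    induction ξ using Ordinal.induction with
    | h ξ ih =>
      intro t ht
      refine le_of_forall_lt fun ζ hζ => ?_
      have h1 : t ∈ derivIter Q (Order.succ ζ) :=
        derivIter_anti Q ξ _ (Order.succ_le_of_lt hζ) ht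
      rw [derivIter_succ] at h1
      obtain ⟨h2, u, hu, htu⟩ := mem_treeDeriv_iff.1 h1
      have h3 : ζ ≤ g u := ih ζ hζ u hu
      exact h3.trans_lt (hmono t (derivIter_subset Q ζ h2) u (derivIter_subset Q ζ hu) htu)
  have hemp : derivIter Q β = ∅ := by
    rw [eq_empty_iff_forall_notMem]
    intro t ht
    exact absurd (hlt t (derivIter_subset Q β ht)) (not_lt.2 (key β t ht))
  exact csInf_le' hemp

theorem ord_div_mono {a b : Ordinal.{u}} (c : Ordinal.{u}) (h : a ≤ b) : a / c ≤ b / c := by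
  rcases eq_or_ne c 0 with rfl | hc
  · simp [Ordinal.div_zero]
  · rw [Ordinal.div_le hc]
    exact h.trans_lt (Ordinal.lt_mul_succ_div b hc)

theorem ord_div_div (a : Ordinal.{u}) {b c : Ordinal.{u}} (hb : b ≠ 0) (hc : c ≠ 0) :
    a / (b * c) = a / b / c := by
  have hbc : b * c ≠ 0 := mul_ne_zero hb hc
  apply le_antisymm
  · rw [Ordinal.div_le hbc, mul_assoc]
    have h1 : a < b * Order.succ (a / b) := Ordinal.lt_mul_succ_div a hb
    have h2 : a / b < c * Order.succ (a / b / c) := Ordinal.lt_mul_succ_div _ hc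
    exact h1.trans_le (mul_le_mul_right (Order.succ_le_of_lt h2) b)
  · rw [Ordinal.div_le hc, Ordinal.div_lt hb, ← mul_assoc]
    exact Ordinal.lt_mul_succ_div a hbc

theorem alpProd_ne_zero (ε : ℕ → Ordinal.{u}) : ∀ i, alpProd ε i ≠ 0
  | 0 => opow_ne_zero _ omega0_ne_zero
  | (i + 1) => mul_ne_zero (alpProd_ne_zero ε i) (opow_ne_zero _ omega0_ne_zero)

theorem block_iff {P : Set α} (hWF : IsWFTree P) {u : α} (hu : u ∈ P) {β : Ordinal.{u}}
    (hβ : β ≠ 0) (δ : Ordinal.{u}) :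
    u ∈ derivIter P (β * δ) \ derivIter P (β * (δ + 1)) ↔ treeTau P u / β = δ := by
  rw [mem_diff, mem_derivIter_iff hWF hu, mem_derivIter_iff hWF hu]
  constructor
  · rintro ⟨h1, h2⟩
    push_neg at h2
    have hle : δ ≤ treeTau P u / β := (Ordinal.le_div hβ).2 h1
    have hlt : treeTau P u / β < δ + 1 := by
      rw [Ordinal.div_lt hβ]; exact h2
    exact le_antisymm (by rwa [Ordinal.add_one_eq_succ, Order.lt_succ_iff] at hlt) hle
  · rintro rfl
    refine ⟨Ordinal.mul_div_le _ _, ?_⟩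
    rw [not_le, Ordinal.add_one_eq_succ]
    exact Ordinal.lt_mul_succ_div _ hβ

/-- The position of `t` within its `i`-th level block. -/
noncomputable def hornerC (P : Set α) (ε : ℕ → Ordinal.{u}) : ℕ → α → Ordinal.{u}
  | 0, t => treeTau P t % alpProd ε 0
  | (i + 1), t => (treeTau P t / alpProd ε i) % (omega0 ^ omega0 ^ ε (i + 1))

theorem hornerC_lt (P : Set α) (ε : ℕ → Ordinal.{u}) (t : α) :
    ∀ i, hornerC P ε i t < omega0 ^ omega0 ^ ε i
  | 0 => Ordinal.mod_lt _ (alpProd_ne_zero ε 0)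
  | (_ + 1) => Ordinal.mod_lt _ (opow_ne_zero _ omega0_ne_zero)

/-- The Horner-style encoding of the block positions of `t` at the levels in `A`. -/
noncomputable def hornerG (P : Set α) (ε : ℕ → Ordinal.{u}) (A : Set ℕ) : ℕ → α → Ordinal.{u}
  | 0, t => A.indicator (fun _ => hornerC P ε 0 t) 0
  | (n + 1), t => indProd ε A n * A.indicator (fun _ => hornerC P ε (n + 1) t) (n + 1) +
      hornerG P ε A n t

theorem indicator_hornerC_lt (P : Set α) (ε : ℕ → Ordinal.{u}) (A : Set ℕ) (t : α) (i : ℕ) :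
    A.indicator (fun _ => hornerC P ε i t) i <
      omega0 ^ (omega0 ^ ε i * A.indicator (fun _ => (1 : Ordinal.{u})) i) := by
  by_cases h : i ∈ A
  · rw [indicator_of_mem h, indicator_of_mem h, mul_one]
    exact hornerC_lt P ε t i
  · rw [indicator_of_notMem h, indicator_of_notMem h, mul_zero, opow_zero]
    exact zero_lt_one

theorem hornerG_lt (P : Set α) (ε : ℕ → Ordinal.{u}) (A : Set ℕ) (t : α) :
    ∀ n, hornerG P ε A n t < indProd ε A n
  | 0 => indicator_hornerC_lt P ε A t 0
  | (n + 1) => by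
    show indProd ε A n * _ + hornerG P ε A n t < indProd ε A n * _
    calc indProd ε A n * A.indicator (fun _ => hornerC P ε (n+1) t) (n+1) + hornerG P ε A n t
        < indProd ε A n * A.indicator (fun _ => hornerC P ε (n+1) t) (n+1) + indProd ε A n :=
          add_lt_add_right (hornerG_lt P ε A t n) _
      _ = indProd ε A n * (A.indicator (fun _ => hornerC P ε (n+1) t) (n+1) + 1) := by
          rw [mul_add_one]
      _ ≤ indProd ε A n *
          omega0 ^ (omega0 ^ ε (n+1) * A.indicator (fun _ => (1:Ordinal.{u})) (n+1)) := by
          apply mul_le_mul_right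
          rw [Ordinal.add_one_eq_succ, Order.succ_le_iff]
          exact indicator_hornerC_lt P ε A t (n+1)

theorem hornerG_strict (P : Set α) (ε : ℕ → Ordinal.{u}) (A : Set ℕ) {s t : α} (m : ℕ)
    (h1 : A.indicator (fun _ => hornerC P ε m t) m < A.indicator (fun _ => hornerC P ε m s) m)
    (h2 : ∀ i, m < i → A.indicator (fun _ => hornerC P ε i s) i
        = A.indicator (fun _ => hornerC P ε i t) i) :
    ∀ n, m ≤ n → hornerG P ε A n t < hornerG P ε A n s := by
  intro n
  induction n with
  | zero =>
    intro hm
    have hm0 : m = 0 := Nat.le_zero.1 hm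
    subst hm0
    exact h1
  | succ n ih =>
    intro hm
    show indProd ε A n * _ + hornerG P ε A n t < indProd ε A n * _ + hornerG P ε A n s
    rcases Nat.lt_succ_iff_lt_or_eq.1 (Nat.lt_succ_of_le hm) with h | h
    · rw [h2 (n + 1) h]
      exact add_lt_add_right (ih (Nat.lt_succ_iff.1 h)) _
    · subst h
      calc indProd ε A n * A.indicator (fun _ => hornerC P ε (n + 1) t) (n + 1) +
            hornerG P ε A n t
          < indProd ε A n * A.indicator (fun _ => hornerC P ε (n + 1) t) (n + 1) +
            indProd ε A n :=
            add_lt_add_right (hornerG_lt P ε A t n) _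
        _ = indProd ε A n * (A.indicator (fun _ => hornerC P ε (n + 1) t) (n + 1) + 1) := by
            rw [mul_add_one]
        _ ≤ indProd ε A n * A.indicator (fun _ => hornerC P ε (n + 1) s) (n + 1) := by
            apply mul_le_mul_right
            rw [Ordinal.add_one_eq_succ, Order.succ_le_iff]
            exact h1
        _ ≤ _ := le_add_right le_rfl

end Aux

/-- Sharpness, part (ii): if `f(s,t) = F(ς_P(s,t))`, then for each
color `j`, any subtree `Q` of `P` on which all pairs receive color `j` has rank at
most `ω^{ω^{ε_0}·1_A(0)}⋯ω^{ω^{ε_l}·1_A(l)}`, where `A = {i ≤ l : F(i) = j}`. -/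
theorem statement2 {α : Type u} [PartialOrder α] (P : Set α) (hP : IsTree P)
    (hWF : IsWFTree P) (k l : ℕ) (ε : ℕ → Ordinal.{u}) (hε : ∀ i < l, ε (i + 1) ≤ ε i)
    (hrank : treeRank P = alpProd ε l) (F : Fin (l + 1) → Fin (k + 1))
    (f : α → α → Fin (k + 1))
    (hf : ∀ s ∈ P, ∀ t ∈ P, s < t →
      ∃ h : sep P ε s t < l + 1, f s t = F ⟨sep P ε s t, h⟩)
    (j : Fin (k + 1)) (Q : Set α) (hQP : Q ⊆ P)
    (hconst : ∀ s ∈ Q, ∀ t ∈ Q, s < t → f s t = j) :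
    treeRank Q ≤ indProd ε {i : ℕ | ∃ h : i < l + 1, F ⟨i, h⟩ = j} l := by
  classical
  have hrkP : derivIter P (treeRank P) = ∅ := csInf_mem hWF
  set A : Set ℕ := {i : ℕ | ∃ h : i < l + 1, F ⟨i, h⟩ = j} with hAdef
  apply treeRank_le_of_forall Q (hornerG P ε A l) (indProd ε A l)
  · exact fun t _ => hornerG_lt P ε A t l
  · intro s hs t ht hst
    have hsP : s ∈ P := hQP hs
    have htP : t ∈ P := hQP ht
    -- characterization of the separation set via ordinal division of τ
    have hsetiff : ∀ i : ℕ,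
        (∃ δ : Ordinal.{u},
          s ∈ derivIter P (alpProd ε i * δ) \ derivIter P (alpProd ε i * (δ + 1)) ∧
          t ∈ derivIter P (alpProd ε i * δ) \ derivIter P (alpProd ε i * (δ + 1))) ↔
        treeTau P s / alpProd ε i = treeTau P t / alpProd ε i := by
      intro i
      constructor
      · rintro ⟨δ, h1, h2⟩
        rw [(block_iff hWF hsP (alpProd_ne_zero ε i) δ).1 h1,
            (block_iff hWF htP (alpProd_ne_zero ε i) δ).1 h2]
      · intro h
        exact ⟨treeTau P t / alpProd ε i,
          (block_iff hWF hsP (alpProd_ne_zero ε i) _).2 h,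
          (block_iff hWF htP (alpProd_ne_zero ε i) _).2 rfl⟩
    have hτlt : ∀ u, u ∈ P → treeTau P u < alpProd ε l := fun u hu =>
      hrank ▸ tau_lt_treeRank hWF hu
    have hDl : treeTau P s / alpProd ε l = treeTau P t / alpProd ε l := by
      rw [Ordinal.div_eq_zero_of_lt (hτlt s hsP), Ordinal.div_eq_zero_of_lt (hτlt t htP)]
    have hsetne : {i : ℕ | ∃ δ : Ordinal.{u},
        s ∈ derivIter P (alpProd ε i * δ) \ derivIter P (alpProd ε i * (δ + 1)) ∧
        t ∈ derivIter P (alpProd ε i * δ) \ derivIter P (alpProd ε i * (δ + 1))}.Nonempty :=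
      ⟨l, (hsetiff l).2 hDl⟩
    obtain ⟨hsep_lt, hfeq⟩ := hf s hsP t htP hst
    have hAj : sep P ε s t ∈ A := ⟨hsep_lt, by rw [← hfeq]; exact hconst s hs t ht hst⟩
    have hmemS : sep P ε s t ∈ {i : ℕ | ∃ δ : Ordinal.{u},
        s ∈ derivIter P (alpProd ε i * δ) \ derivIter P (alpProd ε i * (δ + 1)) ∧
        t ∈ derivIter P (alpProd ε i * δ) \ derivIter P (alpProd ε i * (δ + 1))} :=
      Nat.sInf_mem hsetne
    have hstar_eq : treeTau P s / alpProd ε (sep P ε s t)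
        = treeTau P t / alpProd ε (sep P ε s t) := (hsetiff _).1 hmemS
    have hlow : ∀ i < sep P ε s t,
        treeTau P s / alpProd ε i ≠ treeTau P t / alpProd ε i := by
      intro i hi h
      exact Nat.notMem_of_lt_sInf hi ((hsetiff i).2 h)
    have hτst : treeTau P t < treeTau P s := by
      have := tau_add_one_le hWF hsP htP hst
      rw [Ordinal.add_one_eq_succ, Order.succ_le_iff] at this
      exact this
    have hDle : ∀ i : ℕ, treeTau P t / alpProd ε i ≤ treeTau P s / alpProd ε i :=
      fun i => ord_div_mono _ hτst.le
    have hstep : ∀ (i : ℕ) (u : α), treeTau P u / alpProd ε (i + 1)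
        = (treeTau P u / alpProd ε i) / (omega0 ^ omega0 ^ ε (i + 1)) := fun i u =>
      ord_div_div _ (alpProd_ne_zero ε i) (opow_ne_zero _ omega0_ne_zero)
    have hup : ∀ i : ℕ, sep P ε s t ≤ i →
        treeTau P s / alpProd ε i = treeTau P t / alpProd ε i := by
      intro i
      induction i with
      | zero =>
        intro hi
        have h0 : sep P ε s t = 0 := Nat.le_zero.1 hi
        rw [← h0]; exact hstar_eq
      | succ i ih =>
        intro hi
        rcases Nat.lt_succ_iff_lt_or_eq.1 (Nat.lt_succ_of_le hi) with h | h
        · rw [hstep i s, hstep i t, ih (Nat.lt_succ_iff.1 h)]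
        · rw [← h]; exact hstar_eq
    -- the key claims about the encoding
    have claim1 : A.indicator (fun _ => hornerC P ε (sep P ε s t) t) (sep P ε s t) <
        A.indicator (fun _ => hornerC P ε (sep P ε s t) s) (sep P ε s t) := by
      rw [indicator_of_mem hAj, indicator_of_mem hAj]
      rcases hi0 : sep P ε s t with _ | i
      · show treeTau P t % alpProd ε 0 < treeTau P s % alpProd ε 0
        have hq : treeTau P s / alpProd ε 0 = treeTau P t / alpProd ε 0 := by
          rw [← hi0]; exact hstar_eq
        have h1 := Ordinal.div_add_mod (treeTau P s) (alpProd ε 0)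
        have h2 := Ordinal.div_add_mod (treeTau P t) (alpProd ε 0)
        rw [← h1, ← h2, hq] at hτst
        exact (add_lt_add_iff_left _).1 hτst
      · show (treeTau P t / alpProd ε i) % (omega0 ^ omega0 ^ ε (i + 1)) <
            (treeTau P s / alpProd ε i) % (omega0 ^ omega0 ^ ε (i + 1))
        have hDi : treeTau P t / alpProd ε i < treeTau P s / alpProd ε i :=
          lt_of_le_of_ne (hDle i) fun h => hlow i (hi0 ▸ Nat.lt_succ_self i) h.symm
        have hDsucc : treeTau P s / alpProd ε (i + 1) = treeTau P t / alpProd ε (i + 1) := by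
          rw [← hi0]; exact hstar_eq
        have h1 := Ordinal.div_add_mod (treeTau P s / alpProd ε i) (omega0 ^ omega0 ^ ε (i + 1))
        have h2 := Ordinal.div_add_mod (treeTau P t / alpProd ε i) (omega0 ^ omega0 ^ ε (i + 1))
        rw [← hstep i s] at h1
        rw [← hstep i t] at h2
        rw [← h1, ← h2, hDsucc] at hDi
        exact (add_lt_add_iff_left _).1 hDi
    have claim2 : ∀ i : ℕ, sep P ε s t < i →
        A.indicator (fun _ => hornerC P ε i s) i = A.indicator (fun _ => hornerC P ε i t) i := by
      intro i hi
      by_cases hiA : i ∈ A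
      · rw [indicator_of_mem hiA, indicator_of_mem hiA]
        rcases i with _ | i
        · exact absurd hi (Nat.not_lt_zero _)
        · show (treeTau P s / alpProd ε i) % (omega0 ^ omega0 ^ ε (i + 1)) =
              (treeTau P t / alpProd ε i) % (omega0 ^ omega0 ^ ε (i + 1))
          rw [hup i (Nat.lt_succ_iff.1 hi)]
      · rw [indicator_of_notMem hiA, indicator_of_notMem hiA]
    exact hornerG_strict P ε A (sep P ε s t) claim1 claim2 l (Nat.lt_succ_iff.1 hsep_lt)
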